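/- For k(x*) = ‖x*‖ − log(‖x*‖ + 1) on ℝ^d (Euclidean norm), k is Legendre convex, ∇k(x*) = x*/(‖x*‖+1), and for all x* ≠ 0 the Hessian satisfies ∇²k(x*) = I/(‖x*‖+1) − x* x*ᵀ / ((‖x*‖+1)² ‖x*‖), so that [∇²k(x*)]⁻¹ ⪰ (1 + ‖x*‖)·I. -/

import Mathlib

open Filter Topology RealInnerProductSpace Classical

noncomputable section

abbrev E (d : ℕ) := EuclideanSpace ℝ (Fin d)

/- auxiliary 1D lemmas -/

lemma phi_hasDerivAt' {t : ℝ} (ht : t + 1 ≠ 0) :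
    HasDerivAt (fun s : ℝ => s - Real.log (s + 1)) (1 - (t + 1)⁻¹) t := by
  have h1 : HasDerivAt (fun s : ℝ => s + 1) 1 t := (hasDerivAt_id t).add_const 1
  have h2 : HasDerivAt (fun s : ℝ => Real.log (s + 1)) (1 / (t + 1)) t := by
    simpa using h1.log ht
  exact (hasDerivAt_id t).sub (by simpa [one_div] using h2)

lemma phi_deriv_eq' {t : ℝ} (ht : t + 1 ≠ 0) :
    deriv (fun s : ℝ => s - Real.log (s + 1)) t = 1 - (t + 1)⁻¹ :=
  (phi_hasDerivAt' ht).deriv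

lemma phi_strictMonoOn' :
    StrictMonoOn (fun s : ℝ => s - Real.log (s + 1)) (Set.Ici 0) := by
  apply strictMonoOn_of_deriv_pos (convex_Ici 0)
  · apply ContinuousOn.sub continuousOn_id
    apply ContinuousOn.log (by fun_prop)
    intro x hx; simp only [Set.mem_Ici] at hx; linarith
  · intro x hx
    rw [interior_Ici] at hx
    simp only [Set.mem_Ioi] at hx
    rw [phi_deriv_eq' (by linarith)]
    have h1 : (x + 1)⁻¹ < 1 := by
      rw [inv_lt_one_iff₀]; right; linarith
    linarith

lemma phi_strictConvexOn' :
    StrictConvexOn ℝ (Set.Ici 0) (fun s : ℝ => s - Real.log (s + 1)) := by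
  apply StrictMonoOn.strictConvexOn_of_deriv (convex_Ici 0)
  · apply ContinuousOn.sub continuousOn_id
    apply ContinuousOn.log (by fun_prop)
    intro x hx; simp only [Set.mem_Ici] at hx; linarith
  · rw [interior_Ici]
    intro x hx y hy hxy
    simp only [Set.mem_Ioi] at hx hy
    rw [phi_deriv_eq' (by linarith), phi_deriv_eq' (by linarith)]
    have : (y + 1)⁻¹ < (x + 1)⁻¹ := by
      apply inv_strictAnti₀ <;> linarith
    linarith

lemma log_ge' {t : ℝ} (ht : 0 ≤ t) : t - t ^ 2 / 2 ≤ Real.log (1 + t) := by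
  have hmono : MonotoneOn (fun s : ℝ => Real.log (1 + s) - s + s ^ 2 / 2) (Set.Ici 0) := by
    apply monotoneOn_of_deriv_nonneg (convex_Ici 0)
    · apply ContinuousOn.add (ContinuousOn.sub _ continuousOn_id) (by fun_prop)
      apply ContinuousOn.log (by fun_prop)
      intro x hx; simp only [Set.mem_Ici] at hx; linarith
    · intro x hx
      rw [interior_Ici] at hx
      simp only [Set.mem_Ioi] at hx
      apply DifferentiableAt.differentiableWithinAt
      have h1 : DifferentiableAt ℝ (fun s : ℝ => Real.log (1 + s)) x := by
        apply DifferentiableAt.log (by fun_prop); linarith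
      fun_prop
    · intro x hx
      rw [interior_Ici] at hx
      simp only [Set.mem_Ioi] at hx
      have h1 : HasDerivAt (fun s : ℝ => Real.log (1 + s) - s + s ^ 2 / 2)
          ((1 + x)⁻¹ - 1 + x) x := by
        have hl : HasDerivAt (fun s : ℝ => Real.log (1 + s)) (1 / (1 + x)) x := by
          have h0 : (1 : ℝ) + id x ≠ 0 := by simp only [id_eq]; intro h; linarith
          simpa using ((hasDerivAt_id x).const_add 1).log h0
        have := (hl.sub (hasDerivAt_id x)).add ((hasDerivAt_pow 2 x).div_const 2)
        exact this.congr_deriv (by norm_num)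
      rw [h1.deriv]
      have : (1 + x)⁻¹ - 1 + x = x ^ 2 / (1 + x) := by
        field_simp; ring
      rw [this]
      positivity
  have := hmono (Set.self_mem_Ici) (Set.mem_Ici.2 ht) ht
  simp only [Real.log_one] at this
  simp at this
  linarith

lemma log_le' {t : ℝ} (ht : 0 ≤ t) : Real.log (1 + t) ≤ t := by
  have := Real.log_le_sub_one_of_pos (x := 1 + t) (by linarith)
  linarith

/- derivative of the norm -/

lemma norm_hasFDerivAt' {d : ℕ} {y : E d} (hy : y ≠ 0) :
    HasFDerivAt (fun w : E d => ‖w‖) (‖y‖⁻¹ • (innerSL ℝ y)) y := by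
  have hn : ‖y‖ ≠ 0 := norm_ne_zero_iff.2 hy
  have h2 : (‖y‖ : ℝ) ^ 2 ≠ 0 := pow_ne_zero 2 hn
  have hsq : HasFDerivAt (fun w : E d => ‖w‖ ^ 2) (2 • (innerSL ℝ y)) y := by
    simpa using (hasFDerivAt_id y).norm_sq
  have h := hsq.sqrt h2
  have hfun : (fun w : E d => Real.sqrt (‖w‖ ^ 2)) = fun w : E d => ‖w‖ := by
    funext w; exact Real.sqrt_sq (norm_nonneg w)
  rw [hfun] at h
  refine h.congr_fderiv ?_
  rw [Real.sqrt_sq (norm_nonneg y)]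
  ext v
  simp [smul_smul]
  field_simp

/- abstract module lemmas (match_scalars misbehaves in EuclideanSpace) -/

lemma vec_sub_eq_add {V : Type*} [AddCommGroup V] [Module ℝ V] (v y : V) {r s t : ℝ}
    (h : -s = t) : r • v - s • y = r • v + t • y := by
  rw [sub_eq_add_neg, ← neg_smul, h]

lemma comp_vec1 {V : Type*} [AddCommGroup V] [Module ℝ V] (v y : V) {a c1 c2 : ℝ}
    (ha1 : a + 1 ≠ 0) (h : (a + 1)⁻¹ * c1 = c2) :
    (a + 1)⁻¹ • ((a + 1) • v + c1 • y) - c2 • y = v := by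
  rw [smul_add, smul_smul, inv_mul_cancel₀ ha1, one_smul, smul_smul, h, add_sub_cancel_right]

lemma comp_vec2 {V : Type*} [AddCommGroup V] [Module ℝ V] (v y : V) {a c1 c2 : ℝ}
    (ha1 : a + 1 ≠ 0) (h : (a + 1) * c1 = c2) :
    (a + 1) • ((a + 1)⁻¹ • v - c1 • y) + c2 • y = v := by
  rw [smul_sub, smul_smul, mul_inv_cancel₀ ha1, one_smul, smul_smul, h, sub_add_cancel]

/-- for `k(x*) = ‖x*‖ - log(‖x*‖ + 1)` on `ℝ^d`: `k` is Legendre convex (it is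
differentiable everywhere, so essential smoothness amounts to the gradient formula, and it is
strictly convex), its gradient is `x*/(‖x*‖+1)`, and for every `x* ≠ 0` the Hessian `H`
(the derivative of the gradient map) is given by
`H = I/(‖x*‖+1) - x* x*ᵀ/((‖x*‖+1)²‖x*‖)`, is invertible, and its inverse satisfies
`H⁻¹ ⪰ (1 + ‖x*‖)·I`. -/
theorem stmt17 {d : ℕ} :
    StrictConvexOn ℝ Set.univ (fun y : E d => ‖y‖ - Real.log (‖y‖ + 1)) ∧
    (∀ y : E d,
      HasGradientAt (fun w : E d => ‖w‖ - Real.log (‖w‖ + 1)) ((‖y‖ + 1)⁻¹ • y) y) ∧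
    ∀ y : E d, y ≠ 0 → ∃ H Hinv : E d →L[ℝ] E d,
      HasFDerivAt (fun w : E d => (‖w‖ + 1)⁻¹ • w) H y ∧
      (∀ v : E d, H v = (‖y‖ + 1)⁻¹ • v - (((‖y‖ + 1) ^ 2 * ‖y‖)⁻¹ * ⟪y, v⟫) • y) ∧
      H.comp Hinv = ContinuousLinearMap.id ℝ (E d) ∧
      Hinv.comp H = ContinuousLinearMap.id ℝ (E d) ∧
      ∀ v : E d, (1 + ‖y‖) * ‖v‖ ^ 2 ≤ ⟪v, Hinv v⟫ := by
  refine ⟨?_, ?_, ?_⟩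
  · -- strict convexity
    refine ⟨convex_univ, ?_⟩
    intro x _ y _ hxy a b ha hb hab
    simp only [smul_eq_mul]
    have hxn : ‖x‖ ∈ Set.Ici (0 : ℝ) := Set.mem_Ici.2 (norm_nonneg x)
    have hyn : ‖y‖ ∈ Set.Ici (0 : ℝ) := Set.mem_Ici.2 (norm_nonneg y)
    have hnn : ‖a • x + b • y‖ ∈ Set.Ici (0 : ℝ) := Set.mem_Ici.2 (norm_nonneg _)
    have hle : ‖a • x + b • y‖ ≤ a * ‖x‖ + b * ‖y‖ := by
      calc ‖a • x + b • y‖ ≤ ‖a • x‖ + ‖b • y‖ := norm_add_le _ _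
        _ = a * ‖x‖ + b * ‖y‖ := by
            rw [norm_smul, norm_smul, Real.norm_of_nonneg ha.le, Real.norm_of_nonneg hb.le]
    by_cases hne : ‖x‖ = ‖y‖
    · have hcomb : ‖a • x + b • y‖ < ‖x‖ :=
        norm_combo_lt_of_ne le_rfl (le_of_eq hne.symm) hxy ha hb hab
      have h1 := phi_strictMonoOn' hnn hxn hcomb
      have h2 : a * (‖x‖ - Real.log (‖x‖ + 1)) + b * (‖y‖ - Real.log (‖y‖ + 1))
          = ‖x‖ - Real.log (‖x‖ + 1) := by
        rw [← hne]; linear_combination (‖x‖ - Real.log (‖x‖ + 1)) * hab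
      rw [h2]
      exact h1
    · have hm : a * ‖x‖ + b * ‖y‖ ∈ Set.Ici (0 : ℝ) := by
        simp only [Set.mem_Ici]; positivity
      have h1 := phi_strictMonoOn'.monotoneOn hnn hm hle
      have h2 := phi_strictConvexOn'.2 hxn hyn hne ha hb hab
      simp only [smul_eq_mul] at h2
      calc ‖a • x + b • y‖ - Real.log (‖a • x + b • y‖ + 1)
          ≤ (a * ‖x‖ + b * ‖y‖) - Real.log ((a * ‖x‖ + b * ‖y‖) + 1) := h1
        _ < a * (‖x‖ - Real.log (‖x‖ + 1)) + b * (‖y‖ - Real.log (‖y‖ + 1)) := h2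
  · -- gradient formula
    intro y
    by_cases hy : y = 0
    · subst hy
      rw [smul_zero, hasGradientAt_iff_hasFDerivAt, map_zero]
      rw [hasFDerivAt_iff_isLittleO_nhds_zero]
      rw [Asymptotics.isLittleO_iff]
      intro c hc
      filter_upwards [Metric.ball_mem_nhds (0 : E d) (by positivity : (0 : ℝ) < 2 * c)]
        with h hh
      rw [mem_ball_zero_iff] at hh
      have hn : (0 : ℝ) ≤ ‖h‖ := norm_nonneg h
      have e1 : ‖(0 : E d) + h‖ = ‖h‖ := by rw [zero_add]
      have hge := log_ge' hn
      have hlee := log_le' hn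
      simp only [e1, norm_zero, Real.log_one, ContinuousLinearMap.zero_apply,
        zero_add, sub_zero]
      rw [Real.norm_of_nonneg (by rw [add_comm]; linarith)]
      rw [add_comm (‖h‖ : ℝ) 1]
      nlinarith
    · have ha : (0 : ℝ) < ‖y‖ := norm_pos_iff.2 hy
      have ha1 : ‖y‖ + 1 ≠ 0 := by positivity
      have ha0 : ‖y‖ ≠ 0 := ne_of_gt ha
      rw [hasGradientAt_iff_hasFDerivAt]
      have hcomp := (phi_hasDerivAt' ha1).comp_hasFDerivAt y (norm_hasFDerivAt' hy)
      have heq : (InnerProductSpace.toDual ℝ (E d)) ((‖y‖ + 1)⁻¹ • y)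
          = (1 - (‖y‖ + 1)⁻¹) • (‖y‖⁻¹ • innerSL ℝ y) := by
        refine ContinuousLinearMap.ext fun v => ?_
        rw [InnerProductSpace.toDual_apply_apply]
        rw [real_inner_smul_left]
        simp only [ContinuousLinearMap.coe_smul', Pi.smul_apply, innerSL_apply_apply, smul_eq_mul]
        field_simp
        ring
      rw [heq]
      exact hcomp
  · -- Hessian
    intro y hy
    have ha : (0 : ℝ) < ‖y‖ := norm_pos_iff.2 hy
    set a := ‖y‖ with hadef
    have ha1 : a + 1 ≠ 0 := by positivity
    have ha0 : a ≠ 0 := ne_of_gt ha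
    have hyy : ⟪y, y⟫ = a ^ 2 := real_inner_self_eq_norm_sq y
    set k : ℝ := ((a + 1) ^ 2 * a)⁻¹ with hkdef
    set H : E d →L[ℝ] E d := (a + 1)⁻¹ • ContinuousLinearMap.id ℝ (E d) -
      (k • innerSL ℝ y).smulRight y with hHdef
    set Hinv : E d →L[ℝ] E d := (a + 1) • ContinuousLinearMap.id ℝ (E d) +
      (((a + 1) / a) • innerSL ℝ y).smulRight y with hHinvdef
    have hH : ∀ v : E d, H v = (a + 1)⁻¹ • v - (k * ⟪y, v⟫) • y := by
      intro v
      simp only [hHdef, ContinuousLinearMap.sub_apply, ContinuousLinearMap.smul_apply,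
        ContinuousLinearMap.id_apply, ContinuousLinearMap.smulRight_apply,
        ContinuousLinearMap.coe_smul', Pi.smul_apply, innerSL_apply_apply, smul_eq_mul]
    have hHinv : ∀ v : E d, Hinv v = (a + 1) • v + ((a + 1) / a * ⟪y, v⟫) • y := by
      intro v
      simp only [hHinvdef, ContinuousLinearMap.add_apply, ContinuousLinearMap.smul_apply,
        ContinuousLinearMap.id_apply, ContinuousLinearMap.smulRight_apply,
        ContinuousLinearMap.coe_smul', Pi.smul_apply, innerSL_apply_apply, smul_eq_mul]
    refine ⟨H, Hinv, ?_, hH, ?_, ?_, ?_⟩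
    · -- HasFDerivAt
      have hc : HasFDerivAt (fun w : E d => ‖w‖ + 1) (a⁻¹ • innerSL ℝ y) y :=
        (norm_hasFDerivAt' hy).add_const 1
      have hinv : HasFDerivAt (fun w : E d => (‖w‖ + 1)⁻¹)
          (-((a + 1) ^ 2)⁻¹ • (a⁻¹ • innerSL ℝ y)) y := by
        have := (hasDerivAt_inv ha1).comp_hasFDerivAt y hc
        exact this.congr_fderiv (by simp)
      have hsm : HasFDerivAt (fun w : E d => (‖w‖ + 1)⁻¹ • w)
          ((a + 1)⁻¹ • ContinuousLinearMap.id ℝ (E d) +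
            (-((a + 1) ^ 2)⁻¹ • (a⁻¹ • innerSL ℝ y)).smulRight y) y := by
        exact hinv.smul (hasFDerivAt_id y)
      have heq : (a + 1)⁻¹ • ContinuousLinearMap.id ℝ (E d) +
          (-((a + 1) ^ 2)⁻¹ • (a⁻¹ • innerSL ℝ y)).smulRight y = H := by
        refine ContinuousLinearMap.ext fun v => ?_
        rw [hH v]
        simp only [ContinuousLinearMap.add_apply, ContinuousLinearMap.smul_apply,
          ContinuousLinearMap.id_apply, ContinuousLinearMap.smulRight_apply,
          ContinuousLinearMap.coe_smul', Pi.smul_apply, innerSL_apply_apply, smul_eq_mul]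
        have hs : ∀ c : ℝ, -(k * c) = -((a + 1) ^ 2)⁻¹ * (a⁻¹ * c) := by
          intro c; rw [hkdef]; field_simp
        exact (vec_sub_eq_add v y (hs ⟪y, v⟫)).symm
      rw [← heq]
      exact hsm
    · -- H ∘ Hinv = id
      refine ContinuousLinearMap.ext fun v => ?_
      rw [ContinuousLinearMap.comp_apply, ContinuousLinearMap.id_apply, hHinv v,
        hH ((a + 1) • v + ((a + 1) / a * ⟪y, v⟫) • y), inner_add_right,
        real_inner_smul_right, real_inner_smul_right, hyy]
      have hs : ∀ c : ℝ, (a + 1)⁻¹ * ((a + 1) / a * c)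
          = k * ((a + 1) * c + (a + 1) / a * c * a ^ 2) := by
        intro c; rw [hkdef]; field_simp; ring
      exact comp_vec1 v y ha1 (hs ⟪y, v⟫)
    · -- Hinv ∘ H = id
      refine ContinuousLinearMap.ext fun v => ?_
      rw [ContinuousLinearMap.comp_apply, ContinuousLinearMap.id_apply, hH v,
        hHinv ((a + 1)⁻¹ • v - (k * ⟪y, v⟫) • y), inner_sub_right,
        real_inner_smul_right, real_inner_smul_right, hyy]
      have hs : ∀ c : ℝ, (a + 1) / a * ((a + 1)⁻¹ * c - k * c * a ^ 2) = (a + 1) * (k * c) := by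
        intro c; rw [hkdef]; field_simp; ring
      rw [hs ⟪y, v⟫]
      exact comp_vec2 v y ha1 rfl
    · -- coercivity
      intro v
      rw [hHinv v, inner_add_right, real_inner_smul_right, real_inner_smul_right,
        real_inner_self_eq_norm_sq, real_inner_comm v y]
      have h2 : 0 ≤ (a + 1) / a * ⟪v, y⟫ * ⟪v, y⟫ := by
        rw [mul_assoc]
        exact mul_nonneg (by positivity) (mul_self_nonneg _)
      nlinarith [norm_nonneg v]
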